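/- arXiv:0710.5571 — 2 statements merged into one kernel-verified Lean document; each statement's English description precedes it below -/
import Mathlib

section
/- For all integers k ≥ 2 and t ≥ 3, M(k,t,3) − 1 ≥ 2^(t/2) · (M(k−2,t,3) − 1). More precisely, given a 2-edge-coloring of K_m with m = 2^(t/2) and no monochromatic K_t, and a (k−2)-edge-coloring of K_r with r = M(k−2,t,3) − 1 having no rainbow triangle and no monochromatic K_t, the product (blow-up) coloring of K_{mr} — partition the vertices into m blocks of size r, color edges between blocks i ≠ j by the 2-coloring's color of (i,j) using 2 new colors, and color edges within each block by the (k−2)-coloring — is a k-edge-coloring of K_{mr} with no rainbow triangle and no monochromatic K_t. -/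
open Finset

/-- The set of colors appearing on the edges inside a vertex set `S`. -/
def colorsOn {V C : Type*} [DecidableEq V] [DecidableEq C]
    (c : Sym2 V → C) (S : Finset V) : Finset C :=
  S.offDiag.image fun p => c s(p.1, p.2)

/-- The edges inside `S` receive pairwise distinct colors (a rainbow copy of `K_{|S|}`). -/
def IsRainbow {V C : Type*} (c : Sym2 V → C) (S : Finset V) : Prop :=
  ∀ a ∈ S, ∀ b ∈ S, ∀ x ∈ S, ∀ y ∈ S,
    a ≠ b → x ≠ y → s(a, b) ≠ s(x, y) → c s(a, b) ≠ c s(x, y)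

/-- All edges inside `S` receive the same color (a monochromatic copy of `K_{|S|}`). -/
def IsMonochromatic {V C : Type*} (c : Sym2 V → C) (S : Finset V) : Prop :=
  ∀ a ∈ S, ∀ b ∈ S, ∀ x ∈ S, ∀ y ∈ S, a ≠ b → x ≠ y → c s(a, b) = c s(x, y)

/-- All edges inside `S` receive the color `i`. -/
def IsMonoInColor {V C : Type*} (c : Sym2 V → C) (i : C) (S : Finset V) : Prop :=
  ∀ a ∈ S, ∀ b ∈ S, a ≠ b → c s(a, b) = i

/-- `colorDeg c i x` is the degree `d_i(x)` of the vertex `x` in color `i`. -/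
def colorDeg {V C : Type*} [Fintype V] [DecidableEq V] [DecidableEq C]
    (c : Sym2 V → C) (i : C) (x : V) : ℕ :=
  (univ.filter fun y => y ≠ x ∧ c s(x, y) = i).card

instance {V C : Type*} [DecidableEq V] [DecidableEq C] (c : Sym2 V → C) (S : Finset V) :
    Decidable (IsRainbow c S) := by unfold IsRainbow; infer_instance

instance {V C : Type*} [DecidableEq V] [DecidableEq C] (c : Sym2 V → C) (S : Finset V) :
    Decidable (IsMonochromatic c S) := by unfold IsMonochromatic; infer_instance

instance {V C : Type*} [DecidableEq V] [DecidableEq C] (c : Sym2 V → C) (i : C) (S : Finset V) :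
    Decidable (IsMonoInColor c i S) := by unfold IsMonoInColor; infer_instance

/-- There is a `k`-edge-coloring of `K_n` with no rainbow `K_t` in which every `K_4`
receives at least three colors (the colorings counted by `g(k,t)`). -/
def GoodColoring (k t n : ℕ) : Prop :=
  ∃ c : Sym2 (Fin n) → Fin k,
    (∀ S : Finset (Fin n), S.card = t → ¬ IsRainbow c S) ∧
    (∀ S : Finset (Fin n), S.card = 4 → 3 ≤ (colorsOn c S).card)

/-! ### Auxiliary lemmas -/

section Transport

variable {V W C D : Type*}

lemma isMono_of_comp {j : C → D} (hj : Function.Injective j)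
    {c : Sym2 V → C} {S : Finset V} (h : IsMonochromatic (fun e => j (c e)) S) :
    IsMonochromatic c S := fun a ha b hb x hx y hy hab hxy =>
  hj (h a ha b hb x hx y hy hab hxy)

lemma isRainbow_of_comp {j : C → D}
    {c : Sym2 V → C} {S : Finset V} (h : IsRainbow (fun e => j (c e)) S) :
    IsRainbow c S := fun a ha b hb x hx y hy hab hxy hne heq =>
  h a ha b hb x hx y hy hab hxy hne (congrArg j heq)

lemma isMono_image [DecidableEq W] {f : V → W} (hf : Function.Injective f)
    {c : Sym2 W → C} {S : Finset V}
    (h : IsMonochromatic (fun e => c (Sym2.map f e)) S) :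
    IsMonochromatic c (S.image f) := by
  intro a' ha' b' hb' x' hx' y' hy' hab hxy
  simp only [Finset.mem_image] at ha' hb' hx' hy'
  obtain ⟨a, ha, rfl⟩ := ha'; obtain ⟨b, hb, rfl⟩ := hb'
  obtain ⟨x, hx, rfl⟩ := hx'; obtain ⟨y, hy, rfl⟩ := hy'
  have := h a ha b hb x hx y hy (fun h' => hab (by rw [h'])) (fun h' => hxy (by rw [h']))
  simpa using this

lemma isRainbow_image [DecidableEq W] {f : V → W} (hf : Function.Injective f)
    {c : Sym2 W → C} {S : Finset V}
    (h : IsRainbow (fun e => c (Sym2.map f e)) S) :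
    IsRainbow c (S.image f) := by
  intro a' ha' b' hb' x' hx' y' hy' hab hxy hne
  simp only [Finset.mem_image] at ha' hb' hx' hy'
  obtain ⟨a, ha, rfl⟩ := ha'; obtain ⟨b, hb, rfl⟩ := hb'
  obtain ⟨x, hx, rfl⟩ := hx'; obtain ⟨y, hy, rfl⟩ := hy'
  have := h a ha b hb x hx y hy (fun h' => hab (by rw [h']))
    (fun h' => hxy (by rw [h']))
    (fun h' => hne (by
      have : Sym2.map f s(a, b) = Sym2.map f s(x, y) := by rw [h']
      simpa using this))
  simpa using this

end Transport
lemma fin2_cases (x y z : Fin 2) : x = y ∨ x = z ∨ y = z := by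
  have hx := x.isLt; have hy := y.isLt; have hz := z.isLt
  have : x.val = y.val ∨ x.val = z.val ∨ y.val = z.val := by omega
  rcases this with h | h | h
  · exact Or.inl (Fin.ext h)
  · exact Or.inr (Or.inl (Fin.ext h))
  · exact Or.inr (Or.inr (Fin.ext h))

lemma not_rainbow_of_eq {V C : Type*} (c : Sym2 V → C) (S : Finset V)
    {u v x y : V} (hu : u ∈ S) (hv : v ∈ S) (hx : x ∈ S) (hy : y ∈ S)
    (huv : u ≠ v) (hxy : x ≠ y) (hne : s(u,v) ≠ s(x,y))
    (heq : c s(u,v) = c s(x,y)) : ¬ IsRainbow c S := fun hR =>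
  hR u hu v hv x hx y hy huv hxy hne heq

lemma blowup {k t m r : ℕ} (ht : 3 ≤ t)
    (c₁ : Sym2 (Fin m) → Fin 2) (c₂ : Sym2 (Fin r) → Fin k)
    (h1 : ∀ S : Finset (Fin m), S.card = t → ¬ IsMonochromatic c₁ S)
    (h2 : ∀ S : Finset (Fin r), S.card = 3 → ¬ IsRainbow c₂ S)
    (h3 : ∀ S : Finset (Fin r), S.card = t → ¬ IsMonochromatic c₂ S)
    (c₃ : Sym2 (Fin m × Fin r) → (Fin 2 ⊕ Fin k))
    (hc₃ : ∀ p q : Fin m × Fin r, p ≠ q →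
      c₃ s(p, q) = if p.1 = q.1 then Sum.inr (c₂ s(p.2, q.2)) else Sum.inl (c₁ s(p.1, q.1))) :
    (∀ S : Finset (Fin m × Fin r), S.card = 3 → ¬ IsRainbow c₃ S) ∧
    (∀ S : Finset (Fin m × Fin r), S.card = t → ¬ IsMonochromatic c₃ S) := by
  have hin : ∀ p q : Fin m × Fin r, p ≠ q → p.1 = q.1 →
      c₃ s(p,q) = Sum.inr (c₂ s(p.2, q.2)) := by
    intro p q hne h1'; rw [hc₃ p q hne, if_pos h1']
  have hout : ∀ p q : Fin m × Fin r, p.1 ≠ q.1 →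
      c₃ s(p,q) = Sum.inl (c₁ s(p.1, q.1)) := by
    intro p q h1'; rw [hc₃ p q (fun h => h1' (by rw [h])), if_neg h1']
  constructor
  · -- no rainbow triangle
    rintro S hS3 hR
    obtain ⟨p, q, w, hpq, hpw, hqw, rfl⟩ := Finset.card_eq_three.mp hS3
    have hpS : p ∈ ({p,q,w} : Finset _) := by simp
    have hqS : q ∈ ({p,q,w} : Finset _) := by simp
    have hwS : w ∈ ({p,q,w} : Finset _) := by simp
    by_cases h₁ : p.1 = q.1
    · by_cases h₂ : p.1 = w.1
      · -- all in one block
        have hq2 : p.2 ≠ q.2 := fun h => hpq (Prod.ext h₁ h)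
        have hw2 : p.2 ≠ w.2 := fun h => hpw (Prod.ext h₂ h)
        have hqw2 : q.2 ≠ w.2 := fun h => hqw (Prod.ext (h₁ ▸ h₂) h)
        set T : Finset (Fin r) := {p.2, q.2, w.2} with hT
        have hTcard : T.card = 3 := by
          rw [hT, Finset.card_insert_of_notMem (by simp [hq2, hw2]),
            Finset.card_insert_of_notMem (by simp [hqw2]), Finset.card_singleton]
        apply h2 T hTcard
        have hlift : ∀ a ∈ T, (p.1, a) ∈ ({p,q,w} : Finset (Fin m × Fin r)) := by
          intro a ha
          rw [hT] at ha
          simp only [Finset.mem_insert, Finset.mem_singleton] at ha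
          rcases ha with rfl | rfl | rfl
          · simpa using hpS
          · have : (p.1, q.2) = q := Prod.ext h₁ rfl
            rw [this]; exact hqS
          · have : (p.1, w.2) = w := Prod.ext h₂ rfl
            rw [this]; exact hwS
        intro a ha b hb x hx y hy hab hxy hne
        have key := hR (p.1, a) (hlift a ha) (p.1, b) (hlift b hb) (p.1, x) (hlift x hx)
          (p.1, y) (hlift y hy) (fun h => hab (congrArg Prod.snd h))
          (fun h => hxy (congrArg Prod.snd h))
          (by
            intro h
            rcases Sym2.eq_iff.mp h with ⟨h1', h2'⟩ | ⟨h1', h2'⟩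
            · simp only [Prod.mk.injEq] at h1' h2'
              exact hne (by rw [h1'.2, h2'.2])
            · simp only [Prod.mk.injEq] at h1' h2'
              exact hne (by rw [h1'.2, h2'.2, Sym2.eq_swap]))
        rw [hin (p.1, a) (p.1, b) (fun h => hab (congrArg Prod.snd h)) rfl,
          hin (p.1, x) (p.1, y) (fun h => hxy (congrArg Prod.snd h)) rfl] at key
        exact fun h => key (congrArg Sum.inr h)
      · -- p,q same block, w different
        have h₃ : q.1 ≠ w.1 := h₁ ▸ h₂
        have key : c₃ s(p, w) = c₃ s(q, w) := by
          rw [hout p w h₂, hout q w h₃, h₁]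
        exact not_rainbow_of_eq c₃ _ hpS hwS hqS hwS hpw hqw
          (by
            intro h
            rcases Sym2.eq_iff.mp h with ⟨h1', _⟩ | ⟨_, h2'⟩
            · exact hpq h1'
            · exact hqw h2'.symm) key hR
    · by_cases h₂ : p.1 = w.1
      · -- p,w same block, q different
        have h₃ : w.1 ≠ q.1 := fun h => h₁ (h₂.trans h)
        have key : c₃ s(p, q) = c₃ s(w, q) := by
          rw [hout p q h₁, hout w q h₃, h₂]
        exact not_rainbow_of_eq c₃ _ hpS hqS hwS hqS hpq (Ne.symm hqw)
          (by
            intro h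
            rcases Sym2.eq_iff.mp h with ⟨h1', _⟩ | ⟨_, h2'⟩
            · exact hpw h1'
            · exact hqw h2')
          key hR
      · by_cases h₃ : q.1 = w.1
        · -- q,w same block, p different
          have key : c₃ s(q, p) = c₃ s(w, p) := by
            rw [hout q p (fun h => h₁ h.symm), hout w p (fun h => h₂ h.symm), h₃]
          exact not_rainbow_of_eq c₃ _ hqS hpS hwS hpS (Ne.symm hpq) (Ne.symm hpw)
            (by
              intro h
              rcases Sym2.eq_iff.mp h with ⟨h1', _⟩ | ⟨h1', h2'⟩
              · exact hqw h1'
              · exact hpw h2')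
            key hR
        · -- all blocks distinct
          rcases fin2_cases (c₁ s(p.1, q.1)) (c₁ s(p.1, w.1)) (c₁ s(q.1, w.1)) with h | h | h
          · exact not_rainbow_of_eq c₃ _ hpS hqS hpS hwS hpq hpw
              (by
                intro h'
                rcases Sym2.eq_iff.mp h' with ⟨_, h2'⟩ | ⟨h1', _⟩
                · exact hqw h2'
                · exact hpw h1')
              (by rw [hout p q h₁, hout p w h₂, h]) hR
          · exact not_rainbow_of_eq c₃ _ hpS hqS hqS hwS hpq hqw
              (by
                intro h'
                rcases Sym2.eq_iff.mp h' with ⟨h1', _⟩ | ⟨h1', _⟩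
                · exact hpq h1'
                · exact hpw h1')
              (by rw [hout p q h₁, hout q w h₃, h]) hR
          · exact not_rainbow_of_eq c₃ _ hpS hwS hqS hwS hpw hqw
              (by
                intro h'
                rcases Sym2.eq_iff.mp h' with ⟨h1', _⟩ | ⟨_, h2'⟩
                · exact hpq h1'
                · exact hqw h2'.symm)
              (by rw [hout p w h₂, hout q w h₃, h]) hR
  · -- no monochromatic K_t
    rintro S hSt hM
    by_cases hex : ∃ p ∈ S, ∃ q ∈ S, p.1 ≠ q.1
    · obtain ⟨p, hp, q, hq, hpq1⟩ := hex
      have hpq : p ≠ q := fun h => hpq1 (by rw [h])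
      have hfst : ∀ a ∈ S, ∀ b ∈ S, a ≠ b → a.1 ≠ b.1 := by
        intro a ha b hb hab h1'
        have := hM a ha b hb p hp q hq hab hpq
        rw [hin a b hab h1', hout p q hpq1] at this
        exact Sum.inr_ne_inl this
      have hinj : Set.InjOn Prod.fst (S : Set (Fin m × Fin r)) := by
        intro a ha b hb h
        by_contra hne
        exact hfst a ha b hb hne h
      refine h1 (S.image Prod.fst) ?_ ?_
      · rw [Finset.card_image_of_injOn hinj, hSt]
      · intro a' ha' b' hb' x' hx' y' hy' hab' hxy'
        simp only [Finset.mem_image] at ha' hb' hx' hy'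
        obtain ⟨a, ha, rfl⟩ := ha'; obtain ⟨b, hb, rfl⟩ := hb'
        obtain ⟨x, hx, rfl⟩ := hx'; obtain ⟨y, hy, rfl⟩ := hy'
        have hab : a ≠ b := fun h => hab' (by rw [h])
        have hxy : x ≠ y := fun h => hxy' (by rw [h])
        have := hM a ha b hb x hx y hy hab hxy
        rw [hout a b hab', hout x y hxy'] at this
        exact Sum.inl.inj this
    · push_neg at hex
      have hinj : Set.InjOn Prod.snd (S : Set (Fin m × Fin r)) := by
        intro a ha b hb h
        exact Prod.ext (hex a ha b hb) h
      refine h3 (S.image Prod.snd) ?_ ?_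
      · rw [Finset.card_image_of_injOn hinj, hSt]
      · intro a' ha' b' hb' x' hx' y' hy' hab' hxy'
        simp only [Finset.mem_image] at ha' hb' hx' hy'
        obtain ⟨a, ha, rfl⟩ := ha'; obtain ⟨b, hb, rfl⟩ := hb'
        obtain ⟨x, hx, rfl⟩ := hx'; obtain ⟨y, hy, rfl⟩ := hy'
        have hab : a ≠ b := fun h => hab' (by rw [h])
        have hxy : x ≠ y := fun h => hxy' (by rw [h])
        have := hM a ha b hb x hx y hy hab hxy
        rw [hin a b hab (hex a ha b hb), hin x y hxy (hex x hx y hy)] at this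
        exact Sum.inr.inj this
lemma mono_exists_color {V C : Type*} (c : Sym2 V → C) (S : Finset V)
    (h2 : 2 ≤ S.card) (h : IsMonochromatic c S) : ∃ i, IsMonoInColor c i S := by
  obtain ⟨a, ha, b, hb, hab⟩ := Finset.one_lt_card.mp h2
  exact ⟨c s(a, b), fun x hx y hy hxy => h x hx y hy a ha b hb hxy hab⟩

/-- The edge set of a finset. -/
def edgesOf {V : Type*} [DecidableEq V] (S : Finset V) : Finset (Sym2 V) :=
  S.offDiag.image fun p => s(p.1, p.2)

lemma mem_edgesOf {V : Type*} [DecidableEq V] {S : Finset V} {e : Sym2 V} :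
    e ∈ edgesOf S ↔ ∃ a ∈ S, ∃ b ∈ S, a ≠ b ∧ e = s(a, b) := by
  simp only [edgesOf, Finset.mem_image, Finset.mem_offDiag]
  constructor
  · rintro ⟨⟨a, b⟩, ⟨ha, hb, hab⟩, rfl⟩
    exact ⟨a, ha, b, hb, hab, rfl⟩
  · rintro ⟨a, ha, b, hb, hab, rfl⟩
    exact ⟨⟨a, b⟩, ⟨ha, hb, hab⟩, rfl⟩

lemma card_edgesOf {V : Type*} [DecidableEq V] (S : Finset V) :
    (edgesOf S).card = S.card.choose 2 := by
  classical
  have himg : edgesOf S =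
      ((univ : Finset (Sym2 ↥S)).filter fun a => ¬ a.IsDiag).image (Sym2.map Subtype.val) := by
    ext e
    simp only [mem_edgesOf, Finset.mem_image, Finset.mem_filter, Finset.mem_univ, true_and]
    constructor
    · rintro ⟨a, ha, b, hb, hab, rfl⟩
      refine ⟨s(⟨a, ha⟩, ⟨b, hb⟩), ?_, rfl⟩
      rw [Sym2.mk_isDiag_iff]
      exact fun h => hab (congrArg Subtype.val h)
    · rintro ⟨a, hdiag, rfl⟩
      induction a with
      | _ u v =>
        refine ⟨u.1, u.2, v.1, v.2, ?_, rfl⟩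
        simpa using fun h => hdiag (by simp [Sym2.mk_isDiag_iff, h])
  rw [himg, Finset.card_image_of_injective _ (Sym2.map.injective Subtype.val_injective)]
  have := Sym2.card_subtype_not_diag (α := ↥S)
  rw [Fintype.card_subtype] at this
  rw [this, Fintype.card_coe]

lemma card_mono_filter {m : ℕ} (B : Finset (Sym2 (Fin m))) (i : Fin 2) :
    ((univ : Finset (Sym2 (Fin m) → Fin 2)).filter fun c => ∀ e ∈ B, c e = i).card =
      2 ^ (Fintype.card (Sym2 (Fin m)) - B.card) := by
  have : ((univ : Finset (Sym2 (Fin m) → Fin 2)).filter fun c => ∀ e ∈ B, c e = i).card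
      = Fintype.card {c : Sym2 (Fin m) → Fin 2 // ∀ e ∈ B, c e = i} := by
    rw [Fintype.card_subtype]
  rw [this]
  have e : {c : Sym2 (Fin m) → Fin 2 // ∀ e ∈ B, c e = i} ≃ (↥(Bᶜ) → Fin 2) :=
    { toFun := fun c e => c.1 e.1
      invFun := fun g => ⟨fun e => if h : e ∈ B then i else g ⟨e, by simp [h]⟩,
        fun x hx => dif_pos hx⟩
      left_inv := by
        rintro ⟨c, hc⟩
        ext e
        by_cases h : e ∈ B
        · simp [h, hc e h]
        · simp [h]
      right_inv := by
        intro g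
        funext e
        have he : (e : Sym2 (Fin m)) ∉ B := Finset.mem_compl.mp e.2
        simp [he] }
  rw [Fintype.card_congr e, Fintype.card_fun, Fintype.card_coe, Finset.card_compl,
    Fintype.card_fin]

lemma exists_no_mono (m t : ℕ) (ht : 2 ≤ t)
    (harith : 2 * m.choose t < 2 ^ t.choose 2) :
    ∃ c : Sym2 (Fin m) → Fin 2, ∀ S : Finset (Fin m), S.card = t → ¬ IsMonochromatic c S := by
  set N := Fintype.card (Sym2 (Fin m)) with hN
  set Bad : Finset (Sym2 (Fin m) → Fin 2) :=
    univ.filter (fun c => ∃ S : Finset (Fin m), S.card = t ∧ IsMonochromatic c S) with hBad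
  by_cases hne : ∃ S : Finset (Fin m), S.card = t
  · obtain ⟨S₀, hS₀⟩ := hne
    have htm : t.choose 2 ≤ N := by
      calc t.choose 2 = (edgesOf S₀).card := by rw [card_edgesOf, hS₀]
        _ ≤ N := by rw [hN]; exact Finset.card_le_univ _
    have hsub : Bad ⊆ (Finset.powersetCard t (univ : Finset (Fin m))).biUnion
        (fun S => (univ : Finset (Fin 2)).biUnion
          fun i => univ.filter fun c : Sym2 (Fin m) → Fin 2 => ∀ e ∈ edgesOf S, c e = i) := by
      intro c hc
      rw [hBad, Finset.mem_filter] at hc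
      obtain ⟨-, S, hSt, hmono⟩ := hc
      obtain ⟨i, hi⟩ := mono_exists_color c S (by omega) hmono
      refine Finset.mem_biUnion.mpr ⟨S, ?_, Finset.mem_biUnion.mpr ⟨i, Finset.mem_univ _, ?_⟩⟩
      · exact Finset.mem_powersetCard.mpr ⟨Finset.subset_univ _, hSt⟩
      · refine Finset.mem_filter.mpr ⟨Finset.mem_univ _, ?_⟩
        intro e he
        obtain ⟨a, ha, b, hb, hab, rfl⟩ := mem_edgesOf.mp he
        exact hi a ha b hb hab
    have hcard : Bad.card < 2 ^ N := by
      calc Bad.card ≤ ∑ S ∈ Finset.powersetCard t (univ : Finset (Fin m)),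
            ((univ : Finset (Fin 2)).biUnion
              fun i => univ.filter fun c : Sym2 (Fin m) → Fin 2 => ∀ e ∈ edgesOf S, c e = i).card :=
            le_trans (Finset.card_le_card hsub) (Finset.card_biUnion_le)
        _ ≤ ∑ S ∈ Finset.powersetCard t (univ : Finset (Fin m)),
            ∑ i ∈ (univ : Finset (Fin 2)),
              (univ.filter fun c : Sym2 (Fin m) → Fin 2 => ∀ e ∈ edgesOf S, c e = i).card :=
            Finset.sum_le_sum fun S _ => Finset.card_biUnion_le
        _ = ∑ S ∈ Finset.powersetCard t (univ : Finset (Fin m)), 2 * 2 ^ (N - t.choose 2) := by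
            refine Finset.sum_congr rfl fun S hS => ?_
            have hSt : S.card = t := (Finset.mem_powersetCard.mp hS).2
            have heach : ∀ i ∈ (univ : Finset (Fin 2)),
                (univ.filter fun c : Sym2 (Fin m) → Fin 2 => ∀ e ∈ edgesOf S, c e = i).card
                  = 2 ^ (N - t.choose 2) := fun i _ => by
              rw [card_mono_filter, card_edgesOf, hSt]
            rw [Finset.sum_congr rfl heach, Finset.sum_const, Finset.card_univ,
              Fintype.card_fin, smul_eq_mul]
        _ = m.choose t * (2 * 2 ^ (N - t.choose 2)) := by
            rw [Finset.sum_const, Finset.card_powersetCard, Finset.card_univ,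
              Fintype.card_fin, smul_eq_mul]
        _ < 2 ^ t.choose 2 * 2 ^ (N - t.choose 2) := by
            rw [← mul_assoc]
            exact Nat.mul_lt_mul_of_lt_of_le (by rw [mul_comm]; exact harith) le_rfl
              (by positivity)
        _ = 2 ^ N := by rw [← pow_add, Nat.add_sub_cancel' htm]
    have : (Badᶜ).Nonempty := by
      rw [← Finset.card_pos, Finset.card_compl]
      have : Fintype.card (Sym2 (Fin m) → Fin 2) = 2 ^ N := by
        rw [Fintype.card_fun, Fintype.card_fin]
      omega
    obtain ⟨c, hc⟩ := this
    refine ⟨c, fun S hSt hmono => ?_⟩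
    rw [Finset.mem_compl, hBad, Finset.mem_filter] at hc
    exact hc ⟨Finset.mem_univ _, S, hSt, hmono⟩
  · push_neg at hne
    exact ⟨fun _ => 0, fun S hSt => absurd hSt (hne S)⟩
lemma factA : ∀ s : ℕ, 2 ≤ s → 2 ^ (1 + s) < (2 * s).factorial := by
  intro s hs
  induction s with
  | zero => omega
  | succ n ih =>
    rcases Nat.lt_or_ge n 2 with h | h
    · interval_cases n
      · omega
      · norm_num [Nat.factorial]
    · have hn := ih h
      have h1 : 2 * (n + 1) = (2 * n) + 1 + 1 := by ring
      rw [h1, Nat.factorial_succ, Nat.factorial_succ]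
      calc 2 ^ (1 + (n + 1)) = 2 * 2 ^ (1 + n) := by ring
        _ < 2 * (2 * n).factorial := by omega
        _ ≤ (2 * n + 1 + 1) * ((2 * n + 1) * (2 * n).factorial) := by
            rw [← mul_assoc]
            exact Nat.mul_le_mul_right _ (by nlinarith)

lemma factB : ∀ s : ℕ, 1 ≤ s → 2 * 3 ^ (2 * s + 3) < 2 ^ (2 * s + 3) * (2 * s + 3).factorial := by
  intro s hs
  induction s with
  | zero => omega
  | succ n ih =>
    rcases Nat.eq_or_lt_of_le hs with h | h
    · have hn0 : n = 0 := by omega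
      subst hn0
      decide
    · have hn : 1 ≤ n := by omega
      have ihn := ih hn
      have h1 : 2 * (n + 1) + 3 = (2 * n + 3) + 1 + 1 := by ring
      rw [h1, Nat.factorial_succ, Nat.factorial_succ, pow_succ, pow_succ, pow_succ, pow_succ]
      set a := 2 * n + 3
      set F := a.factorial
      have hF : 1 ≤ F := Nat.factorial_pos a
      have ha : 5 ≤ a := by omega
      calc 2 * (3 ^ a * 3 * 3) = 9 * (2 * 3 ^ a) := by ring
        _ < 9 * (2 ^ a * F) := by
            exact Nat.mul_lt_mul_of_le_of_lt (le_refl 9) ihn (by norm_num)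
        _ = 9 * (2 ^ a * F) := rfl
        _ ≤ (4 * (a + 1 + 1) * (a + 1)) * (2 ^ a * F) := by
            exact Nat.mul_le_mul_right _ (by nlinarith)
        _ = (2 ^ a * 2 * 2) * ((a + 1 + 1) * ((a + 1) * F)) := by ring

lemma choose_factorial_le (m t : ℕ) : m.choose t * t.factorial ≤ m ^ t :=
  calc m.choose t * t.factorial = m.descFactorial t := by
        rw [Nat.descFactorial_eq_factorial_mul_choose]; ring
    _ ≤ m ^ t := Nat.descFactorial_le_pow m t

lemma main_arith (t : ℕ) (ht : 3 ≤ t) :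
    2 * ((if Even t then 2 ^ (t / 2) else 3 * 2 ^ ((t - 3) / 2)).choose t) < 2 ^ t.choose 2 := by
  by_cases ht3 : t = 3
  · subst ht3; decide
  set m := if Even t then 2 ^ (t / 2) else 3 * 2 ^ ((t - 3) / 2) with hm
  suffices h : 2 * m ^ t < t.factorial * 2 ^ t.choose 2 by
    have hcf := choose_factorial_le m t
    have h2 : 2 * m.choose t * t.factorial < t.factorial * 2 ^ t.choose 2 := by
      calc 2 * m.choose t * t.factorial = 2 * (m.choose t * t.factorial) := by ring
        _ ≤ 2 * m ^ t := by omega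
        _ < t.factorial * 2 ^ t.choose 2 := h
    have hfp := Nat.factorial_pos t
    by_contra hcon
    push_neg at hcon
    have : t.factorial * 2 ^ t.choose 2 ≤ 2 * m.choose t * t.factorial := by
      calc t.factorial * 2 ^ t.choose 2 ≤ t.factorial * (2 * m.choose t) :=
            Nat.mul_le_mul_left _ hcon
        _ = 2 * m.choose t * t.factorial := by ring
    omega
  rcases Nat.even_or_odd t with he | ho
  · -- even, t ≥ 4
    obtain ⟨s, hs⟩ := he
    have hts : t = 2 * s := by omega
    have hs2 : 2 ≤ s := by omega
    have hmv : m = 2 ^ s := by rw [hm, if_pos ⟨s, hs⟩, hts]; congr 1; omega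
    set u := 2 * s - 1 with hu
    have h2s : 2 * s = u + 1 := by omega
    have hch : t.choose 2 = s * u := by
      rw [Nat.choose_two_right, hts]
      have h1 : 2 * s - 1 = u := rfl
      have h2 : 2 * s * u = 2 * (s * u) := by ring
      rw [h1, h2, Nat.mul_div_cancel_left _ (by norm_num)]
    rw [hmv, hch, hts, ← pow_mul]
    have hexp : s * (2 * s) = s * u + s := by rw [h2s, Nat.mul_succ]
    rw [hexp]
    have key := factA s hs2
    calc 2 * 2 ^ (s * u + s) = 2 ^ (1 + s) * 2 ^ (s * u) := by
          rw [← pow_add, ← pow_succ']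
          congr 1
          omega
      _ < (2 * s).factorial * 2 ^ (s * u) :=
          Nat.mul_lt_mul_of_lt_of_le key le_rfl (by positivity)
  · -- odd, t ≥ 5
    obtain ⟨s', hs'⟩ := ho
    have hs1 : 1 ≤ s' - 1 := by omega
    set s := s' - 1 with hsdef
    have hts : t = 2 * s + 3 := by omega
    have hmv : m = 3 * 2 ^ s := by
      rw [hm, if_neg (by simp [hs', Nat.even_add_one, parity_simps])]
      congr 2
      omega
    have hch : t.choose 2 = s * t + t := by
      rw [Nat.choose_two_right]
      have h1 : t - 1 = 2 * s + 2 := by omega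
      have h2 : t * (t - 1) = 2 * (s * t + t) := by rw [h1, hts]; ring
      rw [h2, Nat.mul_div_cancel_left _ (by norm_num)]
    rw [hmv, hch, mul_pow, ← pow_mul]
    have key := factB s hs1
    rw [← hts] at key
    calc 2 * (3 ^ t * 2 ^ (s * t)) = (2 * 3 ^ t) * 2 ^ (s * t) := by ring
      _ < (2 ^ t * t.factorial) * 2 ^ (s * t) :=
          Nat.mul_lt_mul_of_lt_of_le key le_rfl (by positivity)
      _ = t.factorial * 2 ^ (s * t + t) := by rw [pow_add]; ring

lemma real_bound (t : ℕ) (ht : 3 ≤ t) :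
    (2 : ℝ) ^ ((t : ℝ) / 2) ≤
      (((if Even t then 2 ^ (t / 2) else 3 * 2 ^ ((t - 3) / 2) : ℕ)) : ℝ) := by
  rcases Nat.even_or_odd t with he | ho
  · obtain ⟨s, hs⟩ := he
    have hts : t = 2 * s := by omega
    rw [if_pos ⟨s, hs⟩, hts]
    have h1 : ((2 * s : ℕ) : ℝ) / 2 = (s : ℕ) := by push_cast; ring
    rw [h1, Real.rpow_natCast]
    rw [Nat.mul_div_cancel_left _ (by norm_num)]
    push_cast
    norm_num
  · obtain ⟨s', hs'⟩ := ho
    have hts : t = 2 * (s' - 1) + 3 := by omega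
    set s := s' - 1 with hsdef
    rw [if_neg (by simp [hs', Nat.even_add_one, parity_simps])]
    have hdiv : (t - 3) / 2 = s := by omega
    rw [hdiv]
    have hsplit : (t : ℝ) / 2 = (s : ℝ) + (3 : ℝ) / 2 := by
      rw [hts]; push_cast; ring
    rw [hsplit, Real.rpow_add (by norm_num)]
    have h32 : (2 : ℝ) ^ ((3 : ℝ) / 2) ≤ 3 := by
      have hnn : (0:ℝ) ≤ (2 : ℝ) ^ ((3 : ℝ) / 2) := Real.rpow_nonneg (by norm_num) _
      have hsq : ((2 : ℝ) ^ ((3 : ℝ) / 2)) ^ (2 : ℕ) = 8 := by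
        rw [← Real.rpow_natCast ((2:ℝ) ^ ((3:ℝ)/2)) 2, ← Real.rpow_mul (by norm_num)]
        norm_num
      nlinarith [hnn, hsq]
    have hbase : (2 : ℝ) ^ ((s : ℕ) : ℝ) = ((2 ^ s : ℕ) : ℝ) := by
      rw [Real.rpow_natCast]; push_cast; ring
    calc (2:ℝ) ^ ((s:ℕ):ℝ) * (2:ℝ) ^ ((3:ℝ)/2) ≤ (2:ℝ) ^ ((s:ℕ):ℝ) * 3 := by
          apply mul_le_mul_of_nonneg_left h32 (Real.rpow_nonneg (by norm_num) _)
      _ = ((3 * 2 ^ s : ℕ) : ℝ) := by rw [hbase]; push_cast; ring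

lemma up_closed {k t n n' : ℕ} (h : n ≤ n')
    (hn : ∀ c : Sym2 (Fin n) → Fin k,
        (∃ S : Finset (Fin n), S.card = t ∧ IsMonochromatic c S) ∨
        (∃ S : Finset (Fin n), S.card = 3 ∧ IsRainbow c S)) :
    ∀ c : Sym2 (Fin n') → Fin k,
        (∃ S : Finset (Fin n'), S.card = t ∧ IsMonochromatic c S) ∨
        (∃ S : Finset (Fin n'), S.card = 3 ∧ IsRainbow c S) := by
  intro c
  have hinj : Function.Injective (Fin.castLE h) := Fin.castLE_injective h
  rcases hn (fun e => c (Sym2.map (Fin.castLE h) e)) with ⟨S, hS, hm⟩ | ⟨S, hS, hr⟩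
  · exact Or.inl ⟨S.image (Fin.castLE h),
      by rw [Finset.card_image_of_injective _ hinj, hS], isMono_image hinj hm⟩
  · exact Or.inr ⟨S.image (Fin.castLE h),
      by rw [Finset.card_image_of_injective _ hinj, hS], isRainbow_image hinj hr⟩

/-- For `k ≥ 2` and `t ≥ 3`, `M(k,t,3) − 1 ≥ 2^(t/2) (M(k−2,t,3) − 1)`.  More precisely,
given a `2`-edge-coloring of `K_m` with no monochromatic `K_t`, and a `(k−2)`-edge-coloring
of `K_r` with no rainbow triangle and no monochromatic `K_t`, the blow-up coloring of
`K_{m·r}` (edges between blocks `i ≠ j` get the first coloring's color of `(i,j)`, taken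
from `2` new colors, and edges inside each block are colored by the second coloring) is a
`k`-edge-coloring with no rainbow triangle and no monochromatic `K_t`. -/
theorem M_recursive_lower_bound
    (k t : ℕ) (hk : 2 ≤ k) (ht : 3 ≤ t) (Mk Mk' : ℕ)
    (hMk : IsLeast {n : ℕ | ∀ c : Sym2 (Fin n) → Fin k,
        (∃ S : Finset (Fin n), S.card = t ∧ IsMonochromatic c S) ∨
        (∃ S : Finset (Fin n), S.card = 3 ∧ IsRainbow c S)} Mk)
    (hMk' : IsLeast {n : ℕ | ∀ c : Sym2 (Fin n) → Fin (k - 2),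
        (∃ S : Finset (Fin n), S.card = t ∧ IsMonochromatic c S) ∨
        (∃ S : Finset (Fin n), S.card = 3 ∧ IsRainbow c S)} Mk') :
    (2 : ℝ) ^ ((t : ℝ) / 2) * ((Mk' : ℝ) - 1) ≤ (Mk : ℝ) - 1 ∧
    ∀ (m r : ℕ) (c₁ : Sym2 (Fin m) → Fin 2) (c₂ : Sym2 (Fin r) → Fin (k - 2)),
      (∀ S : Finset (Fin m), S.card = t → ¬ IsMonochromatic c₁ S) →
      (∀ S : Finset (Fin r), S.card = 3 → ¬ IsRainbow c₂ S) →
      (∀ S : Finset (Fin r), S.card = t → ¬ IsMonochromatic c₂ S) →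
      ∀ c₃ : Sym2 (Fin m × Fin r) → (Fin 2 ⊕ Fin (k - 2)),
        (∀ p q : Fin m × Fin r, p ≠ q →
            c₃ s(p, q) = if p.1 = q.1 then Sum.inr (c₂ s(p.2, q.2))
              else Sum.inl (c₁ s(p.1, q.1))) →
        (∀ S : Finset (Fin m × Fin r), S.card = 3 → ¬ IsRainbow c₃ S) ∧
        (∀ S : Finset (Fin m × Fin r), S.card = t → ¬ IsMonochromatic c₃ S) := by
  refine ⟨?_, fun m r c₁ c₂ h1 h2 h3 c₃ hc₃ => blowup ht c₁ c₂ h1 h2 h3 c₃ hc₃⟩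
  -- Part 1
  have hMk'pos : 1 ≤ Mk' := by
    by_contra hcon
    have h0 : Mk' = 0 := by omega
    have hmem := hMk'.1
    rw [h0] at hmem
    rcases hmem (Sym2.lift ⟨fun x _ => x.elim0, fun a _ => a.elim0⟩) with ⟨S, hS, -⟩ | ⟨S, hS, -⟩
    · have hle : S.card ≤ Fintype.card (Fin 0) := Finset.card_le_univ S
      rw [Fintype.card_fin] at hle; omega
    · have hle : S.card ≤ Fintype.card (Fin 0) := Finset.card_le_univ S
      rw [Fintype.card_fin] at hle; omega
  set mv := if Even t then 2 ^ (t / 2) else 3 * 2 ^ ((t - 3) / 2) with hmv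
  obtain ⟨c₁, hc₁⟩ := exists_no_mono mv t (by omega) (main_arith t ht)
  set r := Mk' - 1 with hrdef
  have hnotmem : ¬ (∀ c : Sym2 (Fin r) → Fin (k - 2),
      (∃ S : Finset (Fin r), S.card = t ∧ IsMonochromatic c S) ∨
      (∃ S : Finset (Fin r), S.card = 3 ∧ IsRainbow c S)) := by
    intro hmem
    have := hMk'.2 hmem
    omega
  obtain ⟨c₂, hc₂⟩ := not_forall.mp hnotmem
  push_neg at hc₂
  obtain ⟨hc₂m, hc₂r⟩ := hc₂
  -- the blow-up coloring
  have hfsymm : ∀ p q : Fin mv × Fin r,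
      (if p.1 = q.1 then (Sum.inr (c₂ s(p.2, q.2)) : Fin 2 ⊕ Fin (k - 2))
        else Sum.inl (c₁ s(p.1, q.1)))
      = (if q.1 = p.1 then Sum.inr (c₂ s(q.2, p.2)) else Sum.inl (c₁ s(q.1, p.1))) := by
    intro p q
    by_cases h : p.1 = q.1
    · rw [if_pos h, if_pos h.symm, Sym2.eq_swap]
    · rw [if_neg h, if_neg (fun h' => h h'.symm), Sym2.eq_swap]
  set c₃ : Sym2 (Fin mv × Fin r) → (Fin 2 ⊕ Fin (k - 2)) :=
    Sym2.lift ⟨fun p q => if p.1 = q.1 then Sum.inr (c₂ s(p.2, q.2))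
      else Sum.inl (c₁ s(p.1, q.1)), hfsymm⟩ with hc₃def
  have hc₃spec : ∀ p q : Fin mv × Fin r, p ≠ q →
      c₃ s(p, q) = if p.1 = q.1 then Sum.inr (c₂ s(p.2, q.2))
        else Sum.inl (c₁ s(p.1, q.1)) := fun p q _ => by
    rw [hc₃def, Sym2.lift_mk]
  obtain ⟨hno3, hnoT⟩ := blowup ht c₁ c₂ hc₁ hc₂r hc₂m c₃ hc₃spec
  -- transport to Fin (mv * r)
  have hkk : 2 + (k - 2) = k := by omega
  set j : (Fin 2 ⊕ Fin (k - 2)) → Fin k := fun x => finCongr hkk (finSumFinEquiv x) with hj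
  have hjinj : Function.Injective j :=
    fun a b h' => finSumFinEquiv.injective ((finCongr hkk).injective h')
  set eqv : Fin mv × Fin r ≃ Fin (mv * r) := finProdFinEquiv with heqv
  set Cc : Sym2 (Fin (mv * r)) → Fin k :=
    fun e => j (c₃ (Sym2.map eqv.symm e)) with hCc
  have hnmem : ¬ (∀ c : Sym2 (Fin (mv * r)) → Fin k,
      (∃ S : Finset (Fin (mv * r)), S.card = t ∧ IsMonochromatic c S) ∨
      (∃ S : Finset (Fin (mv * r)), S.card = 3 ∧ IsRainbow c S)) := by
    intro hmem
    rcases hmem Cc with ⟨S, hSt, hSm⟩ | ⟨S, hS3, hSr⟩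
    · have h1 : IsMonochromatic (fun e => c₃ (Sym2.map eqv.symm e)) S :=
        isMono_of_comp hjinj hSm
      have h2 : IsMonochromatic c₃ (S.image eqv.symm) := isMono_image eqv.symm.injective h1
      exact hnoT _ (by rw [Finset.card_image_of_injective _ eqv.symm.injective, hSt]) h2
    · have h1 : IsRainbow (fun e => c₃ (Sym2.map eqv.symm e)) S :=
        isRainbow_of_comp hSr
      have h2 : IsRainbow c₃ (S.image eqv.symm) := isRainbow_image eqv.symm.injective h1
      exact hno3 _ (by rw [Finset.card_image_of_injective _ eqv.symm.injective, hS3]) h2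
  have hlt : mv * r < Mk := by
    by_contra hge
    push_neg at hge
    exact hnmem (up_closed hge hMk.1)
  -- conclude the real inequality
  have hmvreal := real_bound t ht
  rw [← hmv] at hmvreal
  have hMk'real : ((r : ℕ) : ℝ) = (Mk' : ℝ) - 1 := by
    rw [hrdef, Nat.cast_sub hMk'pos]; norm_num
  have hprod : ((mv * r : ℕ) : ℝ) = (mv : ℝ) * ((Mk' : ℝ) - 1) := by
    push_cast [← hMk'real]; ring
  have hMkreal : ((mv * r : ℕ) : ℝ) ≤ (Mk : ℝ) - 1 := by
    have : (mv * r : ℕ) + 1 ≤ Mk := hlt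
    have := (Nat.cast_le (α := ℝ)).mpr this
    push_cast at this ⊢
    linarith
  calc (2 : ℝ) ^ ((t : ℝ) / 2) * ((Mk' : ℝ) - 1)
      ≤ (mv : ℝ) * ((Mk' : ℝ) - 1) := by
        apply mul_le_mul_of_nonneg_right hmvreal
        have : (1 : ℝ) ≤ (Mk' : ℝ) := by exact_mod_cast hMk'pos
        linarith
    _ = ((mv * r : ℕ) : ℝ) := hprod.symm
    _ ≤ (Mk : ℝ) - 1 := hMkreal
end

section
/- In any edge-coloring of the complete graph K_n in which d_i(x) ≤ δn for every vertex x and color i, the number of copies of K_t containing two vertex-disjoint edges of the same color (within the copy) is at most (1/8)·δ·t^4·C(n,t). -/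
open Finset

lemma choose_step (n t : ℕ) (ht : 1 ≤ t) : n * (n - 1).choose (t - 1) = n.choose t * t := by
  cases n with
  | zero => simp [Nat.choose_eq_zero_of_lt (by omega : 0 < t)]
  | succ m =>
    obtain ⟨s, rfl⟩ : ∃ s, t = s + 1 := ⟨t - 1, by omega⟩
    simpa using Nat.add_one_mul_choose_eq m s

lemma key4 (n t : ℕ) (h4 : 4 ≤ t) (htn : t ≤ n) :
    (n * (n-1) * (n-2) * (n-3)) * (n-4).choose (t-4)
      = (t * (t-1) * (t-2) * (t-3)) * n.choose t := by
  have h1 := choose_step n t (by omega)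
  have h2 := choose_step (n-1) (t-1) (by omega)
  have h3 := choose_step (n-2) (t-2) (by omega)
  have h4' := choose_step (n-3) (t-3) (by omega)
  rw [show n-1-1 = n-2 by omega, show t-1-1 = t-2 by omega] at h2
  rw [show n-2-1 = n-3 by omega, show t-2-1 = t-3 by omega] at h3
  rw [show n-3-1 = n-4 by omega, show t-3-1 = t-4 by omega] at h4'
  calc (n * (n-1) * (n-2) * (n-3)) * (n-4).choose (t-4)
      = n * ((n-1) * ((n-2) * ((n-3) * (n-4).choose (t-4)))) := by ring
    _ = n * ((n-1) * ((n-2) * ((n-3).choose (t-3) * (t-3)))) := by rw [h4']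
    _ = n * ((n-1) * ((n-2) * (n-3).choose (t-3))) * (t-3) := by ring
    _ = n * ((n-1) * ((n-2).choose (t-2) * (t-2))) * (t-3) := by rw [h3]
    _ = n * ((n-1) * (n-2).choose (t-2)) * (t-2) * (t-3) := by ring
    _ = n * ((n-1).choose (t-1) * (t-1)) * (t-2) * (t-3) := by rw [h2]
    _ = n * (n-1).choose (t-1) * (t-1) * (t-2) * (t-3) := by ring
    _ = n.choose t * t * (t-1) * (t-2) * (t-3) := by rw [h1]
    _ = (t * (t-1) * (t-2) * (t-3)) * n.choose t := by ring

lemma subset_count {n : ℕ} (t : ℕ) (T : Finset (Fin n)) (hT : T.card = 4) :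
    (((univ : Finset (Fin n)).powersetCard t).filter fun S => T ⊆ S).card
      ≤ (n - 4).choose (t - 4) := by
  have hle : (((univ : Finset (Fin n)).powersetCard t).filter fun S => T ⊆ S).card
      ≤ ((univ \ T).powersetCard (t - 4)).card := by
    apply Finset.card_le_card_of_injOn (fun S => S \ T)
    · intro S hS
      simp only [Finset.mem_coe, mem_filter, Finset.mem_powersetCard] at hS ⊢
      refine ⟨Finset.sdiff_subset_sdiff hS.1.1 le_rfl, ?_⟩
      rw [Finset.card_sdiff_of_subset hS.2, hS.1.2, hT]
    · intro S1 h1 S2 h2 h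
      simp only [mem_filter, Finset.mem_powersetCard, coe_filter, Set.mem_setOf_eq] at h1 h2
      have e1 := Finset.sdiff_union_of_subset h1.2
      have e2 := Finset.sdiff_union_of_subset h2.2
      try simp only at h
      rw [← e1, ← e2, h]
  rw [Finset.card_powersetCard, Finset.card_sdiff_of_subset (Finset.subset_univ T), hT,
    Finset.card_univ, Fintype.card_fin] at hle
  exact hle

set_option maxHeartbeats 2000000

/-- If `d_i(x) ≤ δ n` for every vertex `x` and color `i`, then the number of copies of
`K_t` containing two vertex-disjoint edges of the same color (a matching of size two in
some color) is at most `(1/8) δ t⁴ C(n,t)`. -/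
theorem few_cliques_with_monochromatic_matching
    (n t : ℕ) {C : Type*} [DecidableEq C] (c : Sym2 (Fin n) → C)
    (δ : ℝ) (hδ : 0 < δ)
    (hdeg : ∀ (x : Fin n) (i : C), (colorDeg c i x : ℝ) ≤ δ * n) :
    (((((univ : Finset (Fin n)).powersetCard t).filter fun S =>
        ∃ a ∈ S, ∃ b ∈ S, ∃ x ∈ S, ∃ y ∈ S, a ≠ b ∧ x ≠ y ∧
          a ≠ x ∧ a ≠ y ∧ b ≠ x ∧ b ≠ y ∧
          c s(a, b) = c s(x, y)).card : ℝ))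
      ≤ 1 / 8 * δ * t ^ 4 * (n.choose t) := by
  classical
  set B := ((((univ : Finset (Fin n)).powersetCard t).filter fun S =>
        ∃ a ∈ S, ∃ b ∈ S, ∃ x ∈ S, ∃ y ∈ S, a ≠ b ∧ x ≠ y ∧
          a ≠ x ∧ a ≠ y ∧ b ≠ x ∧ b ≠ y ∧
          c s(a, b) = c s(x, y))) with hBdef
  by_cases hne : B.Nonempty
  swap
  · rw [Finset.not_nonempty_iff_eq_empty] at hne
    rw [hne]
    simp only [Finset.card_empty, Nat.cast_zero]
    positivity
  -- extract 4 ≤ t ≤ n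
  obtain ⟨S0, hS0⟩ := hne
  have hS0' := Finset.mem_filter.mp hS0
  obtain ⟨a0, ha0, b0, hb0, x0, hx0, y0, hy0, hab0, hxy0, hax0, hay0, hbx0, hby0, hcol0⟩ := hS0'.2
  have hS0card : S0.card = t := (Finset.mem_powersetCard.mp hS0'.1).2
  have h4t : 4 ≤ t := by
    have hsub : ({a0, b0, x0, y0} : Finset (Fin n)) ⊆ S0 := by
      intro z hz; simp only [Finset.mem_insert, Finset.mem_singleton] at hz
      rcases hz with rfl | rfl | rfl | rfl <;> assumption
    have hc4 : ({a0, b0, x0, y0} : Finset (Fin n)).card = 4 := by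
      rw [Finset.card_insert_of_notMem (by simp [hab0, hax0, hay0]),
        Finset.card_insert_of_notMem (by simp [hbx0, hby0]),
        Finset.card_insert_of_notMem (by simp [hxy0]), Finset.card_singleton]
    calc 4 = ({a0, b0, x0, y0} : Finset (Fin n)).card := hc4.symm
      _ ≤ S0.card := Finset.card_le_card hsub
      _ = t := hS0card
  have htn : t ≤ n := by
    have h := Finset.card_le_univ S0
    rw [hS0card, Fintype.card_fin] at h
    exact h
  -- the quadruples
  set Q : Finset (Fin n × Fin n × Fin n × Fin n) := univ.filter fun q =>
      q.1 ≠ q.2.1 ∧ q.2.2.1 ≠ q.2.2.2 ∧ q.1 ≠ q.2.2.1 ∧ q.1 ≠ q.2.2.2 ∧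
      q.2.1 ≠ q.2.2.1 ∧ q.2.1 ≠ q.2.2.2 ∧ c s(q.1, q.2.1) = c s(q.2.2.1, q.2.2.2)
    with hQdef
  set P : Finset ((Fin n × Fin n × Fin n × Fin n) × Finset (Fin n)) :=
      (Q ×ˢ B).filter fun p =>
        p.1.1 ∈ p.2 ∧ p.1.2.1 ∈ p.2 ∧ p.1.2.2.1 ∈ p.2 ∧ p.1.2.2.2 ∈ p.2
    with hPdef
  -- Claim A : 8 * B.card ≤ P.card
  have hA : 8 * B.card ≤ P.card := by
    have hPsum : P.card = ∑ S ∈ B, (P.filter fun p => p.2 = S).card := by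
      apply Finset.card_eq_sum_card_fiberwise
      intro p hp
      exact (Finset.mem_product.mp (Finset.mem_filter.mp hp).1).2
    rw [hPsum]
    have hper : ∀ S ∈ B, 8 ≤ (P.filter fun p => p.2 = S).card := by
      intro S hS
      obtain ⟨a, ha, b, hb, x, hx, y, hy, hab, hxy, hax, hay, hbx, hby, hcol⟩ :=
        (Finset.mem_filter.mp hS).2
      have hquad : ∀ a' b' x' y' : Fin n, a' ∈ S → b' ∈ S → x' ∈ S → y' ∈ S →
          a' ≠ b' → x' ≠ y' → a' ≠ x' → a' ≠ y' → b' ≠ x' → b' ≠ y' →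
          c s(a', b') = c s(x', y') →
          ((a', b', x', y'), S) ∈ P.filter fun p => p.2 = S := by
        intro a' b' x' y' h1 h2 h3 h4 h5 h6 h7 h8 h9 h10 h11
        refine Finset.mem_filter.mpr ⟨Finset.mem_filter.mpr ⟨Finset.mem_product.mpr
          ⟨Finset.mem_filter.mpr ⟨Finset.mem_univ _, h5, h6, h7, h8, h9, h10, h11⟩, hS⟩,
          h1, h2, h3, h4⟩, rfl⟩
      have hba : (s(b, a) : Sym2 (Fin n)) = s(a, b) := Sym2.eq_swap
      have hyx : (s(y, x) : Sym2 (Fin n)) = s(x, y) := Sym2.eq_swap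
      set g : Bool × Bool × Bool → (Fin n × Fin n × Fin n × Fin n) := fun u =>
        cond u.1 (cond u.2.1 a b, cond u.2.1 b a, cond u.2.2 x y, cond u.2.2 y x)
          (cond u.2.2 x y, cond u.2.2 y x, cond u.2.1 a b, cond u.2.1 b a) with hg
      have hsub : ((univ : Finset (Bool × Bool × Bool)).image fun u => (g u, S))
          ⊆ P.filter fun p => p.2 = S := by
        intro p hp
        simp only [Finset.mem_image, Finset.mem_univ, true_and] at hp
        obtain ⟨⟨u1, u2, u3⟩, rfl⟩ := hp
        cases u1 <;> cases u2 <;> cases u3 <;>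
          simp only [hg, Bool.cond_true, Bool.cond_false]
        · exact hquad y x b a hy hx hb ha hxy.symm hab.symm hby.symm hay.symm hbx.symm hax.symm
            (by rw [hyx, hba]; exact hcol.symm)
        · exact hquad x y b a hx hy hb ha hxy hab.symm hbx.symm hax.symm hby.symm hay.symm
            (by rw [hba]; exact hcol.symm)
        · exact hquad y x a b hy hx ha hb hxy.symm hab hay.symm hby.symm hax.symm hbx.symm
            (by rw [hyx]; exact hcol.symm)
        · exact hquad x y a b hx hy ha hb hxy hab hax.symm hbx.symm hay.symm hby.symm hcol.symm
        · exact hquad b a y x hb ha hy hx hab.symm hxy.symm hby hbx hay hax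
            (by rw [hba, hyx]; exact hcol)
        · exact hquad b a x y hb ha hx hy hab.symm hxy hbx hby hax hay
            (by rw [hba]; exact hcol)
        · exact hquad a b y x ha hb hy hx hab hxy.symm hay hax hby hbx
            (by rw [hyx]; exact hcol)
        · exact hquad a b x y ha hb hx hy hab hxy hax hay hbx hby hcol
      have hginj : Function.Injective fun u : Bool × Bool × Bool => (g u, S) := by
        intro p q h
        have h' : g p = g q := congrArg Prod.fst h
        clear h
        obtain ⟨p1, p2, p3⟩ := p; obtain ⟨q1, q2, q3⟩ := q
        cases p1 <;> cases p2 <;> cases p3 <;> cases q1 <;> cases q2 <;> cases q3 <;>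
          simp only [hg, Bool.cond_true, Bool.cond_false, Prod.mk.injEq] at h' <;>
          first
            | rfl
            | (exfalso; tauto)
      calc 8 = ((univ : Finset (Bool × Bool × Bool)).image fun u => (g u, S)).card := by
            rw [Finset.card_image_of_injective _ hginj]
            decide
        _ ≤ _ := Finset.card_le_card hsub
    calc 8 * B.card = ∑ _S ∈ B, 8 := by rw [Finset.sum_const, smul_eq_mul, mul_comm]
      _ ≤ ∑ S ∈ B, (P.filter fun p => p.2 = S).card := Finset.sum_le_sum hper
  -- Claim B : P.card ≤ Q.card * choose
  have hB2 : P.card ≤ Q.card * (n - 4).choose (t - 4) := by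
    have hPsum : P.card = ∑ q ∈ Q, (P.filter fun p => p.1 = q).card := by
      apply Finset.card_eq_sum_card_fiberwise
      intro p hp
      exact (Finset.mem_product.mp (Finset.mem_filter.mp hp).1).1
    rw [hPsum]
    have hper : ∀ q ∈ Q, (P.filter fun p => p.1 = q).card ≤ (n - 4).choose (t - 4) := by
      intro q hq
      obtain ⟨-, h1, h2, h3, h4, h5, h6, -⟩ := Finset.mem_filter.mp hq
      have hT4 : ({q.1, q.2.1, q.2.2.1, q.2.2.2} : Finset (Fin n)).card = 4 := by
        rw [Finset.card_insert_of_notMem (by simp [h1, h3, h4]),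
          Finset.card_insert_of_notMem (by simp [h5, h6]),
          Finset.card_insert_of_notMem (by simp [h2]), Finset.card_singleton]
      refine le_trans ?_ (subset_count t _ hT4)
      apply Finset.card_le_card_of_injOn (fun p => p.2)
      · intro p hp
        obtain ⟨hpP, hp1⟩ := Finset.mem_filter.mp hp
        obtain ⟨hprod, hm1, hm2, hm3, hm4⟩ := Finset.mem_filter.mp hpP
        have hpB := (Finset.mem_product.mp hprod).2
        have hpow := (Finset.mem_filter.mp hpB).1
        refine Finset.mem_filter.mpr ⟨hpow, ?_⟩
        try simp only at hp1
        subst hp1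
        intro z hz
        simp only [Finset.mem_insert, Finset.mem_singleton] at hz
        rcases hz with rfl | rfl | rfl | rfl <;> assumption
      · intro p hp p' hp' h
        simp only [Finset.mem_coe, Finset.mem_filter] at hp hp'
        try simp only at h
        exact Prod.ext (hp.2.trans hp'.2.symm) h
    calc ∑ q ∈ Q, (P.filter fun p => p.1 = q).card
        ≤ ∑ _q ∈ Q, (n - 4).choose (t - 4) := Finset.sum_le_sum hper
      _ = Q.card * (n - 4).choose (t - 4) := by rw [Finset.sum_const, smul_eq_mul]
  -- Claim C : (Q.card : ℝ) ≤ n^3 * (δ n)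
  have hC3 : (Q.card : ℝ) ≤ (n : ℝ) ^ 3 * (δ * n) := by
    have hQsum : Q.card = ∑ p ∈ (univ : Finset (Fin n × Fin n × Fin n)),
        (Q.filter fun q => (q.1, q.2.1, q.2.2.1) = p).card :=
      Finset.card_eq_sum_card_fiberwise fun q _ => Finset.mem_univ _
    have hfib : ∀ p : Fin n × Fin n × Fin n,
        (Q.filter fun q => (q.1, q.2.1, q.2.2.1) = p).card
          ≤ colorDeg c (c s(p.1, p.2.1)) p.2.2 := by
      intro p
      unfold colorDeg
      apply Finset.card_le_card_of_injOn (fun q => q.2.2.2)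
      · intro q hq
        obtain ⟨hqQ, hq1⟩ := Finset.mem_filter.mp hq
        obtain ⟨-, h1, h2, h3, h4, h5, h6, hc⟩ := Finset.mem_filter.mp hqQ
        simp only [Prod.ext_iff] at hq1
        obtain ⟨e1, e2, e3⟩ := hq1
        refine Finset.mem_filter.mpr ⟨Finset.mem_univ _, ?_, ?_⟩
        · rw [← e3]; exact h2.symm
        · rw [← e1, ← e2, ← e3]; exact hc.symm
      · intro q hq q' hq' h
        simp only [Finset.mem_coe, Finset.mem_filter] at hq hq'
        try simp only at h
        have e := hq.2.trans hq'.2.symm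
        simp only [Prod.ext_iff] at e ⊢
        exact ⟨e.1, e.2.1, e.2.2, h⟩
    calc (Q.card : ℝ) = ∑ p ∈ (univ : Finset (Fin n × Fin n × Fin n)),
          ((Q.filter fun q => (q.1, q.2.1, q.2.2.1) = p).card : ℝ) := by
          rw [hQsum]; push_cast; ring
      _ ≤ ∑ _p ∈ (univ : Finset (Fin n × Fin n × Fin n)), δ * n := by
          apply Finset.sum_le_sum
          intro p _
          calc ((Q.filter fun q => (q.1, q.2.1, q.2.2.1) = p).card : ℝ)
              ≤ (colorDeg c (c s(p.1, p.2.1)) p.2.2 : ℝ) := by exact_mod_cast hfib p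
            _ ≤ δ * n := hdeg _ _
      _ = (n : ℝ) ^ 3 * (δ * n) := by
          rw [Finset.sum_const, Finset.card_univ]
          simp only [Fintype.card_prod, Fintype.card_fin]
          ring
  -- numeric part
  set N : ℕ := n * (n-1) * (n-2) * (n-3) with hN
  set T : ℕ := t * (t-1) * (t-2) * (t-3) with hT
  have hid : N * (n-4).choose (t-4) = T * n.choose t := key4 n t h4t htn
  have l1 : n * (t-1) ≤ t * (n-1) := by
    zify [show 1 ≤ t by omega, show 1 ≤ n by omega]; nlinarith [htn]
  have l2 : n * (t-2) ≤ t * (n-2) := by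
    zify [show 2 ≤ t by omega, show 2 ≤ n by omega]; nlinarith [htn]
  have l3 : n * (t-3) ≤ t * (n-3) := by
    zify [show 3 ≤ t by omega, show 3 ≤ n by omega]; nlinarith [htn]
  have hnt : n ^ 4 * T ≤ t ^ 4 * N := by
    calc n ^ 4 * T = (n * t) * ((n * (t-1)) * ((n * (t-2)) * (n * (t-3)))) := by
          rw [hT]; ring
      _ ≤ (n * t) * ((t * (n-1)) * ((t * (n-2)) * (t * (n-3)))) := by
          gcongr
      _ = t ^ 4 * N := by rw [hN]; ring
  have hNpos : 0 < N := by
    rw [hN]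
    have h4n : 4 ≤ n := le_trans h4t htn
    exact Nat.mul_pos (Nat.mul_pos (Nat.mul_pos (by omega) (by omega)) (by omega)) (by omega)
  have hNposR : (0:ℝ) < (N : ℝ) := by exact_mod_cast hNpos
  have hidR : (N : ℝ) * ((n-4).choose (t-4) : ℝ) = (T : ℝ) * (n.choose t : ℝ) := by
    exact_mod_cast hid
  have hntR : ((n : ℝ)) ^ 4 * (T : ℝ) ≤ ((t : ℝ)) ^ 4 * (N : ℝ) := by exact_mod_cast hnt
  have hkey : ((n : ℝ)) ^ 4 * ((n-4).choose (t-4) : ℝ) ≤ ((t : ℝ)) ^ 4 * (n.choose t : ℝ) := by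
    have hchain : (N : ℝ) * (((n : ℝ)) ^ 4 * ((n-4).choose (t-4) : ℝ))
        ≤ (N : ℝ) * (((t : ℝ)) ^ 4 * (n.choose t : ℝ)) := by
      calc (N : ℝ) * (((n : ℝ)) ^ 4 * ((n-4).choose (t-4) : ℝ))
          = ((n : ℝ)) ^ 4 * ((N : ℝ) * ((n-4).choose (t-4) : ℝ)) := by ring
        _ = ((n : ℝ)) ^ 4 * ((T : ℝ) * (n.choose t : ℝ)) := by rw [hidR]
        _ = (((n : ℝ)) ^ 4 * (T : ℝ)) * (n.choose t : ℝ) := by ring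
        _ ≤ (((t : ℝ)) ^ 4 * (N : ℝ)) * (n.choose t : ℝ) := by
            apply mul_le_mul_of_nonneg_right hntR (by positivity)
        _ = (N : ℝ) * (((t : ℝ)) ^ 4 * (n.choose t : ℝ)) := by ring
    exact le_of_mul_le_mul_left hchain hNposR
  have hAR : (8:ℝ) * (B.card : ℝ) ≤ (P.card : ℝ) := by exact_mod_cast hA
  have hB2R : (P.card : ℝ) ≤ (Q.card : ℝ) * ((n-4).choose (t-4) : ℝ) := by exact_mod_cast hB2
  have hchoose_nonneg : (0:ℝ) ≤ ((n-4).choose (t-4) : ℝ) := by positivity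
  calc (B.card : ℝ) = (8:ℝ) * (B.card : ℝ) / 8 := by ring
    _ ≤ (P.card : ℝ) / 8 := by linarith
    _ ≤ ((Q.card : ℝ) * ((n-4).choose (t-4) : ℝ)) / 8 := by linarith
    _ ≤ (((n : ℝ) ^ 3 * (δ * n)) * ((n-4).choose (t-4) : ℝ)) / 8 := by
        have := mul_le_mul_of_nonneg_right hC3 hchoose_nonneg
        linarith
    _ = 1 / 8 * δ * ((n : ℝ) ^ 4 * ((n-4).choose (t-4) : ℝ)) := by ring
    _ ≤ 1 / 8 * δ * ((t : ℝ) ^ 4 * (n.choose t : ℝ)) := by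
        apply mul_le_mul_of_nonneg_left hkey (by positivity)
    _ = 1 / 8 * δ * (t : ℝ) ^ 4 * (n.choose t : ℝ) := by ring
end
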